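/- arXiv:1610.01845 — 2 statements merged into one kernel-verified Lean document; each statement's English description precedes it below -/
import Mathlib

section
/- For all p > 0 and μ ∈ ℝ, the equation −y/p + K₁(y,p,μ)/K(y,p,μ) = 0 has at least one solution y ∈ ℝ, and every solution of this equation is strictly positive. -/
set_option maxHeartbeats 1000000

open Real

namespace Stmt9Aux

/-- Generic summand with quadratic suppression coefficient `c`. -/
noncomputable def term (υ c μ y : ℝ) (n : ℕ) : ℝ :=
  (υ ^ n / (Nat.factorial n : ℝ)) * Real.exp ((y + μ) * n - c * (n : ℝ) ^ 2)

variable {υ c μ y Y : ℝ}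

lemma term_nonneg (hυ : 0 ≤ υ) (n : ℕ) : 0 ≤ term υ c μ y n := by
  unfold term
  have h : (0:ℝ) < (Nat.factorial n : ℝ) := by exact_mod_cast Nat.factorial_pos n
  positivity

lemma term_pos (hυ : 0 < υ) (n : ℕ) : 0 < term υ c μ y n := by
  unfold term
  have h : (0:ℝ) < (Nat.factorial n : ℝ) := by exact_mod_cast Nat.factorial_pos n
  positivity

lemma term_le (hυ : 0 ≤ υ) (hc : 0 ≤ c) (hyY : y ≤ Y) (n : ℕ) :
    term υ c μ y n ≤ (υ * Real.exp (Y + μ)) ^ n / (Nat.factorial n : ℝ) := by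
  have h : (0:ℝ) < (Nat.factorial n : ℝ) := by exact_mod_cast Nat.factorial_pos n
  have h1 : Real.exp ((y + μ) * n - c * (n:ℝ) ^ 2) ≤ Real.exp ((Y + μ) * n) := by
    apply Real.exp_le_exp.mpr
    have h2 : (y + μ) * n ≤ (Y + μ) * n :=
      mul_le_mul_of_nonneg_right (by linarith) (Nat.cast_nonneg n)
    nlinarith [mul_nonneg hc (sq_nonneg (n:ℝ))]
  have h2 : (υ * Real.exp (Y + μ)) ^ n / (Nat.factorial n : ℝ)
      = υ ^ n / (Nat.factorial n : ℝ) * Real.exp ((Y + μ) * n) := by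
    rw [mul_pow, ← Real.exp_nat_mul, mul_comm ((n:ℝ)) (Y + μ)]
    ring
  rw [h2]
  unfold term
  exact mul_le_mul_of_nonneg_left h1 (by positivity)

lemma summable_term (hυ : 0 ≤ υ) (hc : 0 ≤ c) (y : ℝ) : Summable (term υ c μ y) :=
  Summable.of_nonneg_of_le (term_nonneg hυ) (term_le hυ hc le_rfl)
    (Real.summable_pow_div_factorial _)

lemma nterm_le (hυ : 0 ≤ υ) (hc : 0 ≤ c) (hyY : y ≤ Y) (n : ℕ) :
    (n:ℝ) * term υ c μ y n ≤ (2 * (υ * Real.exp (Y + μ))) ^ n / (Nat.factorial n : ℝ) := by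
  have h : (0:ℝ) < (Nat.factorial n : ℝ) := by exact_mod_cast Nat.factorial_pos n
  have hX : (0:ℝ) ≤ υ * Real.exp (Y + μ) := by positivity
  have hn2 : (n:ℝ) ≤ 2 ^ n := by exact_mod_cast (Nat.lt_two_pow_self (n := n)).le
  calc (n:ℝ) * term υ c μ y n
      ≤ (n:ℝ) * ((υ * Real.exp (Y + μ)) ^ n / (Nat.factorial n : ℝ)) :=
        mul_le_mul_of_nonneg_left (term_le hυ hc hyY n) (Nat.cast_nonneg n)
    _ ≤ (2:ℝ) ^ n * ((υ * Real.exp (Y + μ)) ^ n / (Nat.factorial n : ℝ)) :=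
        mul_le_mul_of_nonneg_right hn2 (by positivity)
    _ = (2 * (υ * Real.exp (Y + μ))) ^ n / (Nat.factorial n : ℝ) := by
        rw [mul_pow]; ring

lemma summable_nterm (hυ : 0 ≤ υ) (hc : 0 ≤ c) (y : ℝ) :
    Summable (fun n : ℕ => (n:ℝ) * term υ c μ y n) :=
  Summable.of_nonneg_of_le (fun n => mul_nonneg (Nat.cast_nonneg n) (term_nonneg hυ n))
    (nterm_le hυ hc le_rfl) (Real.summable_pow_div_factorial _)

lemma one_le_tsum_term (hυ : 0 ≤ υ) (hc : 0 ≤ c) : 1 ≤ ∑' n : ℕ, term υ c μ y n := by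
  have h0 : term υ c μ y 0 = 1 := by simp [term]
  calc (1:ℝ) = term υ c μ y 0 := h0.symm
    _ ≤ ∑' n : ℕ, term υ c μ y n :=
        Summable.le_tsum (summable_term hυ hc y) 0 (fun j _ => term_nonneg hυ j)

lemma tsum_term_pos (hυ : 0 ≤ υ) (hc : 0 ≤ c) : 0 < ∑' n : ℕ, term υ c μ y n :=
  lt_of_lt_of_le one_pos (one_le_tsum_term hυ hc)

lemma tsum_nterm_pos (hυ : 0 < υ) (hc : 0 ≤ c) :
    0 < ∑' n : ℕ, (n:ℝ) * term υ c μ y n := by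
  have h1 : 0 < (1:ℝ) * term υ c μ y 1 := by
    rw [one_mul]; exact term_pos hυ 1
  refine lt_of_lt_of_le ?_ (Summable.le_tsum (summable_nterm hυ.le hc y) 1
    (fun j _ => mul_nonneg (Nat.cast_nonneg j) (term_nonneg hυ.le j)))
  simpa using h1

lemma contOn_tsum_term (hυ : 0 ≤ υ) (hc : 0 ≤ c) (Y : ℝ) :
    ContinuousOn (fun y => ∑' n : ℕ, term υ c μ y n) (Set.Iic Y) := by
  apply continuousOn_tsum (u := fun n => (υ * Real.exp (Y + μ)) ^ n / (Nat.factorial n : ℝ))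
  · intro n
    apply Continuous.continuousOn
    unfold term
    fun_prop
  · exact Real.summable_pow_div_factorial _
  · intro n x hx
    rw [Real.norm_eq_abs, abs_of_nonneg (term_nonneg hυ n)]
    exact term_le hυ hc hx n

lemma contOn_tsum_nterm (hυ : 0 ≤ υ) (hc : 0 ≤ c) (Y : ℝ) :
    ContinuousOn (fun y => ∑' n : ℕ, (n:ℝ) * term υ c μ y n) (Set.Iic Y) := by
  apply continuousOn_tsum
    (u := fun n => (2 * (υ * Real.exp (Y + μ))) ^ n / (Nat.factorial n : ℝ))
  · intro n
    apply Continuous.continuousOn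
    unfold term
    fun_prop
  · exact Real.summable_pow_div_factorial _
  · intro n x hx
    rw [Real.norm_eq_abs, abs_of_nonneg (mul_nonneg (Nat.cast_nonneg n) (term_nonneg hυ n))]
    exact nterm_le hυ hc hx n

lemma quarter_sq_le_exp (x : ℝ) (hx : 0 ≤ x) : x ^ 2 / 4 ≤ Real.exp x := by
  have h1 : x / 2 + 1 ≤ Real.exp (x / 2) := Real.add_one_le_exp (x / 2)
  have h2 : Real.exp (x / 2) * Real.exp (x / 2) = Real.exp x := by
    rw [← Real.exp_add]; ring_nf
  nlinarith [Real.exp_pos (x / 2)]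

/-- Main existence-side estimate: for suitable large `Y > 0`, `K1 ≤ (Y/p)·K`. -/
lemma exists_Y {υ p μ c : ℝ} (hυ : 0 < υ) (hp : 0 < p) (hcp : p < 2 * c) :
    ∃ Y : ℝ, 0 < Y ∧
      ∑' n : ℕ, (n:ℝ) * term υ c μ Y n ≤ Y / p * ∑' n : ℕ, term υ c μ Y n := by
  have hc : 0 < c := by linarith
  set ε : ℝ := (2 * c - p) / (2 * p) with hεdef
  have hε : 0 < ε := by
    apply div_pos <;> linarith
  obtain ⟨N, hN⟩ := exists_nat_ge (max (max 1 ((2 * p + μ) / (p * ε)))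
    (max ((Real.log υ + 2) / (c * ε)) ((24 + 8 * ε) / ε ^ 2)))
  have hN1 : (1:ℝ) ≤ N := le_trans (le_trans (le_max_left _ _) (le_max_left _ _)) hN
  have hN2 : (2 * p + μ) / (p * ε) ≤ N :=
    le_trans (le_trans (le_max_right _ _) (le_max_left _ _)) hN
  have hN3 : (Real.log υ + 2) / (c * ε) ≤ N :=
    le_trans (le_trans (le_max_left _ _) (le_max_right _ _)) hN
  have hN4 : (24 + 8 * ε) / ε ^ 2 ≤ N :=
    le_trans (le_trans (le_max_right _ _) (le_max_right _ _)) hN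
  have hN2' : 2 * p + μ ≤ (N:ℝ) * (p * ε) := (div_le_iff₀ (by positivity)).mp hN2
  have hN3' : Real.log υ + 2 ≤ (N:ℝ) * (c * ε) := (div_le_iff₀ (by positivity)).mp hN3
  have hN4' : 24 + 8 * ε ≤ (N:ℝ) * ε ^ 2 := (div_le_iff₀ (by positivity)).mp hN4
  set T : ℕ := ⌈ε * N⌉₊ with hTdef
  have hT1 : ε * N ≤ (T:ℝ) := Nat.le_ceil _
  have hT2 : (T:ℝ) ≤ ε * N + 1 := (Nat.ceil_lt_add_one (by positivity)).le
  set m : ℕ := N + T with hmdef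
  set Y : ℝ := p * ((m:ℝ) + 1) with hYdef
  clear_value Y
  have hmcast : (m:ℝ) = (N:ℝ) + T := by exact_mod_cast rfl
  clear_value T
  clear_value m
  have hYpos : 0 < Y := by
    have : (0:ℝ) ≤ (m:ℝ) := Nat.cast_nonneg m
    rw [hYdef]; nlinarith
  -- (F1)
  have hF1 : Y + μ ≤ 2 * c * N := by
    rw [hYdef, hmcast]
    have h2c : 2 * c = p * (1 + 2 * ε) := by
      rw [hεdef]; field_simp; ring
    rw [h2c]
    nlinarith [hT2, hN2', hp, hε]
  -- q and its bounds
  set q : ℝ := υ * Real.exp (-(c * T)) with hqdef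
  have hq0 : 0 ≤ q := by positivity
  have hcT : Real.log υ + 2 ≤ c * T := by
    have : (N:ℝ) * (c * ε) ≤ c * T := by nlinarith [hT1, hc]
    linarith
  have hq2 : q ≤ Real.exp (-2) := by
    rw [hqdef, ← Real.exp_log hυ, ← Real.exp_add]
    exact Real.exp_le_exp.mpr (by linarith)
  have hqhalf : q ≤ 1 / 2 := by
    refine hq2.trans ?_
    have h2 : (2:ℝ) + 1 ≤ Real.exp 2 := Real.add_one_le_exp 2
    have hmul : Real.exp (-2) * Real.exp 2 = 1 := by
      rw [← Real.exp_add]; norm_num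
    nlinarith [Real.exp_pos (-2)]
  have hq1 : q ≤ Real.exp (-1) := hq2.trans (Real.exp_le_exp.mpr (by norm_num))
  -- (F4)
  have hexpT : 2 * (m:ℝ) + 2 ≤ Real.exp T := by
    have h1 : (ε * N) ^ 2 / 4 ≤ Real.exp (ε * N) := quarter_sq_le_exp _ (by positivity)
    have h2 : Real.exp (ε * N) ≤ Real.exp T := Real.exp_le_exp.mpr hT1
    have h3 : 2 * (m:ℝ) + 2 ≤ (2 + 2 * ε) * N + 4 := by
      rw [hmcast]; nlinarith [hT2]
    have h4 : (2 + 2 * ε) * (N:ℝ) + 4 ≤ (ε * N) ^ 2 / 4 := by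
      nlinarith [hN1, hN4', hε]
    linarith
  -- abbreviations
  set KK : ℝ := ∑' n : ℕ, term υ c μ Y n with hKKdef
  have hKK1 : 1 ≤ KK := one_le_tsum_term hυ.le hc.le
  have hKK0 : 0 ≤ KK := by linarith
  have hsterm : Summable (term υ c μ Y) := summable_term hυ.le hc.le Y
  have htermN_le : term υ c μ Y N ≤ KK :=
    Summable.le_tsum hsterm N (fun j _ => term_nonneg hυ.le j)
  -- claim A
  have claimA : ∀ k : ℕ, term υ c μ Y (N + k)
      ≤ term υ c μ Y N * (υ ^ k * Real.exp (-(c * (k:ℝ) ^ 2))) := by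
    intro k
    have hfp : (0:ℝ) < (Nat.factorial N : ℝ) := by exact_mod_cast Nat.factorial_pos N
    have hfp2 : (0:ℝ) < (Nat.factorial (N + k) : ℝ) := by
      exact_mod_cast Nat.factorial_pos (N + k)
    have hfac : ((Nat.factorial N : ℕ) : ℝ) ≤ ((Nat.factorial (N + k) : ℕ) : ℝ) := by
      exact_mod_cast Nat.factorial_le (Nat.le_add_right N k)
    have h1 : υ ^ (N + k) / ((Nat.factorial (N + k) : ℕ) : ℝ)
        ≤ υ ^ (N + k) / ((Nat.factorial N : ℕ) : ℝ) := by
      apply div_le_div_of_nonneg_left (by positivity) hfp hfac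
    have h2 : Real.exp ((Y + μ) * ((N + k : ℕ) : ℝ) - c * ((N + k : ℕ) : ℝ) ^ 2)
        ≤ Real.exp ((Y + μ) * (N:ℝ) - c * (N:ℝ) ^ 2) * Real.exp (-(c * (k:ℝ) ^ 2)) := by
      rw [← Real.exp_add]
      apply Real.exp_le_exp.mpr
      push_cast
      nlinarith [mul_le_mul_of_nonneg_right hF1 (Nat.cast_nonneg k), hc.le,
        mul_nonneg (mul_nonneg hc.le (Nat.cast_nonneg N)) (Nat.cast_nonneg k)]
    unfold term
    have hrhs : υ ^ N / ((Nat.factorial N : ℕ) : ℝ)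
          * Real.exp ((Y + μ) * (N:ℝ) - c * (N:ℝ) ^ 2)
          * (υ ^ k * Real.exp (-(c * (k:ℝ) ^ 2)))
        = υ ^ (N + k) / ((Nat.factorial N : ℕ) : ℝ)
          * (Real.exp ((Y + μ) * (N:ℝ) - c * (N:ℝ) ^ 2) * Real.exp (-(c * (k:ℝ) ^ 2))) := by
      rw [pow_add]; ring
    rw [hrhs]
    exact mul_le_mul h1 h2 (Real.exp_pos _).le (by positivity)
  -- definition of g
  set f : ℕ → ℝ := fun n => (n:ℝ) * term υ c μ Y n with hfdef
  have hfs : Summable f := summable_nterm hυ.le hc.le Y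
  have hf_nonneg : ∀ n, 0 ≤ f n := fun n =>
    mul_nonneg (Nat.cast_nonneg n) (term_nonneg hυ.le n)
  set g : ℕ → ℝ := fun n => if m ≤ n then f n else 0 with hgdef
  have hg_nonneg : ∀ n, 0 ≤ g n := by
    intro n; by_cases h : m ≤ n <;> simp [hgdef, h, hf_nonneg n]
  have hg_le_f : ∀ n, g n ≤ f n := by
    intro n; by_cases h : m ≤ n <;> simp [hgdef, h, hf_nonneg n]
  have hgs : Summable g := Summable.of_nonneg_of_le hg_nonneg hg_le_f hfs
  -- bound for shifted g
  have hqT : ∀ k : ℕ, υ ^ (T + k) * Real.exp (-(c * ((T + k : ℕ) : ℝ) ^ 2)) ≤ q ^ (T + k) := by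
    intro k
    have h1 : q ^ (T + k) = υ ^ (T + k) * Real.exp ((((T + k : ℕ) : ℝ)) * (-(c * T))) := by
      rw [hqdef, mul_pow, ← Real.exp_nat_mul]
    rw [h1]
    apply mul_le_mul_of_nonneg_left _ (by positivity)
    apply Real.exp_le_exp.mpr
    push_cast
    nlinarith [hc.le, (Nat.cast_nonneg T : (0:ℝ) ≤ T), (Nat.cast_nonneg k : (0:ℝ) ≤ k),
      mul_nonneg (mul_nonneg hc.le (Nat.cast_nonneg T : (0:ℝ) ≤ T)) (Nat.cast_nonneg k : (0:ℝ) ≤ k),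
      mul_nonneg hc.le (sq_nonneg (k:ℝ))]
  have bound2 : ∀ k : ℕ, g (m + k) ≤ KK * q ^ T * (((m:ℝ) + k) * q ^ k) := by
    intro k
    have hmk : m + k = N + (T + k) := by omega
    have hstep : term υ c μ Y (m + k) ≤ KK * q ^ (T + k) := by
      rw [hmk]
      calc term υ c μ Y (N + (T + k))
          ≤ term υ c μ Y N * (υ ^ (T + k) * Real.exp (-(c * ((T + k : ℕ) : ℝ) ^ 2))) := by
            have := claimA (T + k)
            push_cast at this ⊢
            convert this using 4 <;> push_cast <;> ring
        _ ≤ term υ c μ Y N * q ^ (T + k) :=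
            mul_le_mul_of_nonneg_left (hqT k) (term_nonneg hυ.le N)
        _ ≤ KK * q ^ (T + k) :=
            mul_le_mul_of_nonneg_right htermN_le (pow_nonneg hq0 _)
    have hgmk : g (m + k) = ((m + k : ℕ) : ℝ) * term υ c μ Y (m + k) := by
      simp [hgdef, hfdef, Nat.le_add_right m k]
    rw [hgmk]
    calc ((m + k : ℕ) : ℝ) * term υ c μ Y (m + k)
        ≤ ((m + k : ℕ) : ℝ) * (KK * q ^ (T + k)) :=
          mul_le_mul_of_nonneg_left hstep (Nat.cast_nonneg _)
      _ = KK * q ^ T * (((m:ℝ) + k) * q ^ k) := by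
          push_cast; rw [pow_add]; ring
  -- geometric sums
  have hs1 : Summable (fun k : ℕ => ((1:ℝ) / 2) ^ k) :=
    summable_geometric_of_lt_one (by norm_num) (by norm_num)
  have hs2 : Summable (fun k : ℕ => (k:ℝ) * (1 / 2) ^ k) := by
    have h : Summable (fun n : ℕ => (n:ℝ) ^ 1 * (1/2 : ℝ) ^ n) :=
      summable_pow_mul_geometric_of_norm_lt_one 1
        (by rw [Real.norm_eq_abs, abs_lt]; norm_num; try norm_num)
    simpa using h
  have hs3 : Summable (fun k : ℕ => ((m:ℝ) + k) * (1 / 2) ^ k) := by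
    refine ((hs1.mul_left (m:ℝ)).add hs2).congr fun k => by ring
  have hmono : ∀ k : ℕ, ((m:ℝ) + k) * q ^ k ≤ ((m:ℝ) + k) * (1 / 2) ^ k := fun k =>
    mul_le_mul_of_nonneg_left (pow_le_pow_left₀ hq0 hqhalf k) (by positivity)
  have hsq : Summable (fun k : ℕ => ((m:ℝ) + k) * q ^ k) :=
    Summable.of_nonneg_of_le (fun k => by positivity) hmono hs3
  have hval : ∑' k : ℕ, ((m:ℝ) + k) * (1 / 2) ^ k = 2 * (m:ℝ) + 2 := by
    have he : (fun k : ℕ => ((m:ℝ) + k) * (1 / 2) ^ k)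
        = fun k : ℕ => (m:ℝ) * (1 / 2) ^ k + (k:ℝ) * (1 / 2) ^ k := funext fun k => by ring
    rw [he, Summable.tsum_add (hs1.mul_left _) hs2, tsum_mul_left,
      tsum_geometric_of_lt_one (by norm_num) (by norm_num),
      tsum_coe_mul_geometric_of_norm_lt_one (r := (1/2 : ℝ))
        (by rw [Real.norm_eq_abs, abs_lt]; norm_num; try norm_num)]
    norm_num
    ring
  have hts : ∑' k : ℕ, ((m:ℝ) + k) * q ^ k ≤ 2 * (m:ℝ) + 2 := by
    calc ∑' k : ℕ, ((m:ℝ) + k) * q ^ k ≤ ∑' k : ℕ, ((m:ℝ) + k) * (1 / 2) ^ k :=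
          Summable.tsum_le_tsum hmono hsq hs3
      _ = 2 * (m:ℝ) + 2 := hval
  -- sum of g
  have hinj : Function.Injective (fun k : ℕ => m + k) := add_right_injective m
  have hgshift : Summable (fun k : ℕ => g (m + k)) := hgs.comp_injective hinj
  have hgsum_eq : ∑' k : ℕ, g (m + k) = ∑' n : ℕ, g n := by
    apply Function.Injective.tsum_eq hinj
    intro n hn
    rcases le_or_gt m n with h | h
    · exact ⟨n - m, show m + (n - m) = n by omega⟩
    · exfalso; apply hn; simp [hgdef, not_le.mpr h]
  have hgsum_le : ∑' n : ℕ, g n ≤ KK := by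
    rw [← hgsum_eq]
    have hrs : Summable (fun k : ℕ => KK * q ^ T * (((m:ℝ) + k) * q ^ k)) :=
      hsq.mul_left _
    calc ∑' k : ℕ, g (m + k)
        ≤ ∑' k : ℕ, KK * q ^ T * (((m:ℝ) + k) * q ^ k) :=
          Summable.tsum_le_tsum bound2 hgshift hrs
      _ = KK * q ^ T * ∑' k : ℕ, (((m:ℝ) + k) * q ^ k) := tsum_mul_left
      _ ≤ KK * q ^ T * (2 * (m:ℝ) + 2) :=
          mul_le_mul_of_nonneg_left hts (by positivity)
      _ ≤ KK * 1 := by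
          have hqTe : q ^ T ≤ Real.exp (-(T:ℝ)) := by
            calc q ^ T ≤ Real.exp (-1) ^ T := pow_le_pow_left₀ hq0 hq1 T
              _ = Real.exp ((T:ℝ) * (-1)) := (Real.exp_nat_mul _ T).symm
              _ = Real.exp (-(T:ℝ)) := by ring_nf
          have h2 : q ^ T * (2 * (m:ℝ) + 2) ≤ Real.exp (-(T:ℝ)) * (2 * (m:ℝ) + 2) :=
            mul_le_mul_of_nonneg_right hqTe (by positivity)
          have h3 : Real.exp (-(T:ℝ)) * (2 * (m:ℝ) + 2) ≤ 1 := by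
            have hmulinv : Real.exp (-(T:ℝ)) * Real.exp (T:ℝ) = 1 := by
              rw [← Real.exp_add]; norm_num
            nlinarith [Real.exp_pos (-(T:ℝ)), hexpT]
          calc KK * q ^ T * (2 * (m:ℝ) + 2) = KK * (q ^ T * (2 * (m:ℝ) + 2)) := by ring
            _ ≤ KK * 1 := mul_le_mul_of_nonneg_left (h2.trans h3) hKK0
      _ = KK := mul_one KK
  -- final assembly
  refine ⟨Y, hYpos, ?_⟩
  have hYp : Y / p = (m:ℝ) + 1 := by
    rw [hYdef]; field_simp
  have hfinal : ∑' n : ℕ, f n ≤ ((m:ℝ) + 1) * KK := by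
    have hbnd : ∀ n : ℕ, f n ≤ (m:ℝ) * term υ c μ Y n + g n := by
      intro n
      by_cases h : m ≤ n
      · have : (0:ℝ) ≤ (m:ℝ) * term υ c μ Y n :=
          mul_nonneg (Nat.cast_nonneg m) (term_nonneg hυ.le n)
        simp only [hgdef, if_pos h]
        linarith
      · simp only [hgdef, if_neg h]
        have hn : (n:ℝ) ≤ (m:ℝ) := by exact_mod_cast (le_of_not_ge h).trans (le_refl m) 
        have := mul_le_mul_of_nonneg_right hn (term_nonneg (υ := υ) (c := c) (μ := μ) (y := Y) hυ.le n)
        simpa [hfdef] using this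
    have hrs2 : Summable (fun n : ℕ => (m:ℝ) * term υ c μ Y n + g n) :=
      (hsterm.mul_left _).add hgs
    calc ∑' n : ℕ, f n ≤ ∑' n : ℕ, ((m:ℝ) * term υ c μ Y n + g n) :=
          Summable.tsum_le_tsum hbnd hfs hrs2
      _ = (m:ℝ) * KK + ∑' n : ℕ, g n := by
          rw [Summable.tsum_add (hsterm.mul_left _) hgs, tsum_mul_left]
      _ ≤ (m:ℝ) * KK + KK := by linarith
      _ = ((m:ℝ) + 1) * KK := by ring
  rw [hYp]
  exact hfinal

end Stmt9Aux

/-- The single-cell partition function `K(y,p,μ)` with cell volume `υ` and ratio `a`. -/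
noncomputable def K (υ a y p μ : ℝ) : ℝ :=
  ∑' n : ℕ, (υ ^ n / (Nat.factorial n : ℝ)) *
    Real.exp ((y + μ) * n - (a * p / 2) * (n : ℝ) ^ 2)

/-- The function `E(y,p,μ) = -y²/(2p) + ln K(y,p,μ)`. -/
noncomputable def E (υ a y p μ : ℝ) : ℝ :=
  -(y ^ 2) / (2 * p) + Real.log (K υ a y p μ)


/-- `K₁(y,p,μ) = Σ_{n≥1} (n·υⁿ/n!)·exp((y+μ)n − (ap/2)n²)` (the `n = 0` term vanishes). -/
noncomputable def K1 (υ a y p μ : ℝ) : ℝ :=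
  ∑' n : ℕ, ((n : ℝ) * υ ^ n / (Nat.factorial n : ℝ)) *
    Real.exp ((y + μ) * n - (a * p / 2) * (n : ℝ) ^ 2)

lemma K_eq (υ a y p μ : ℝ) :
    K υ a y p μ = ∑' n : ℕ, Stmt9Aux.term υ (a * p / 2) μ y n := rfl

lemma K1_eq (υ a y p μ : ℝ) :
    K1 υ a y p μ = ∑' n : ℕ, (n : ℝ) * Stmt9Aux.term υ (a * p / 2) μ y n :=
  tsum_congr fun n => by unfold Stmt9Aux.term; ring

theorem stmt_9 (υ a : ℝ) (hυ : 0 < υ) (ha : 1 < a) (p μ : ℝ) (hp : 0 < p) :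
    (∃ y : ℝ, -y / p + K1 υ a y p μ / K υ a y p μ = 0) ∧
    (∀ y : ℝ, -y / p + K1 υ a y p μ / K υ a y p μ = 0 → 0 < y) := by
  have hc' : (0:ℝ) < a * p / 2 := by nlinarith
  have hc : (0:ℝ) ≤ a * p / 2 := hc'.le
  have hKpos : ∀ y : ℝ, 0 < K υ a y p μ := fun y => by
    rw [K_eq]; exact Stmt9Aux.tsum_term_pos hυ.le hc
  have hK1pos : ∀ y : ℝ, 0 < K1 υ a y p μ := fun y => by
    rw [K1_eq]; exact Stmt9Aux.tsum_nterm_pos hυ hc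
  constructor
  · obtain ⟨Y, hY, hbound⟩ :=
      Stmt9Aux.exists_Y (μ := μ) (c := a * p / 2) hυ hp (by nlinarith)
    set F : ℝ → ℝ := fun y => -y / p + K1 υ a y p μ / K υ a y p μ with hFdef
    have hcont : ContinuousOn F (Set.Icc 0 Y) := by
      rw [hFdef]
      apply ContinuousOn.add
      · exact (continuous_id.neg.div_const p).continuousOn
      · apply ContinuousOn.div
        · have e1 : (fun y => K1 υ a y p μ)
              = fun y => ∑' n : ℕ, (n : ℝ) * Stmt9Aux.term υ (a * p / 2) μ y n :=
            funext fun y => K1_eq υ a y p μ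
          rw [e1]
          exact (Stmt9Aux.contOn_tsum_nterm hυ.le hc Y).mono Set.Icc_subset_Iic_self
        · have e2 : (fun y => K υ a y p μ)
              = fun y => ∑' n : ℕ, Stmt9Aux.term υ (a * p / 2) μ y n :=
            funext fun y => K_eq υ a y p μ
          rw [e2]
          exact (Stmt9Aux.contOn_tsum_term hυ.le hc Y).mono Set.Icc_subset_Iic_self
        · exact fun x _ => ne_of_gt (hKpos x)
    have hFY : F Y ≤ 0 := by
      have hb' : K1 υ a Y p μ ≤ Y / p * K υ a Y p μ := by
        rw [K1_eq, K_eq]; exact hbound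
      have hdiv : K1 υ a Y p μ / K υ a Y p μ ≤ Y / p :=
        (div_le_iff₀ (hKpos Y)).mpr (by linarith [hb'])
      have : F Y = -Y / p + K1 υ a Y p μ / K υ a Y p μ := rfl
      rw [this]
      have : -Y / p = -(Y / p) := by ring
      linarith [hdiv]
    have hF0 : 0 ≤ F 0 := by
      have : F 0 = -0 / p + K1 υ a 0 p μ / K υ a 0 p μ := rfl
      rw [this]
      have h1 : 0 < K1 υ a 0 p μ / K υ a 0 p μ := div_pos (hK1pos 0) (hKpos 0)
      have h2 : -(0:ℝ) / p = 0 := by ring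
      linarith
    have hmem : (0:ℝ) ∈ Set.Icc (F Y) (F 0) := ⟨hFY, hF0⟩
    obtain ⟨y, _, hy⟩ := intermediate_value_Icc' hY.le hcont hmem
    exact ⟨y, hy⟩
  · intro y hy
    have hdiv : 0 < K1 υ a y p μ / K υ a y p μ := div_pos (hK1pos y) (hKpos y)
    have h1 : y / p = K1 υ a y p μ / K υ a y p μ := by
      have : -y / p = -(y / p) := by ring
      linarith [hy, this]
    by_contra h
    push_neg at h
    have h2 : y / p ≤ 0 := div_nonpos_of_nonpos_of_nonneg h hp.le
    linarith
end

section
/- For all p > 0, μ ∈ ℝ and y ∈ ℝ, the mixed partial derivative satisfies ∂/∂μ (∂E/∂y)(y,p,μ) = ∂²E/∂y²(y,p,μ) + 1/p, and this quantity is strictly positive. -/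
/-- weight `w_n(s)` -/
noncomputable def wfun (υ a p s : ℝ) (n : ℕ) : ℝ :=
  υ ^ n / (Nat.factorial n : ℝ) * Real.exp (s * n - (a * p / 2) * (n : ℝ) ^ 2)

/-- moment sums -/
noncomputable def S (υ a p : ℝ) (k : ℕ) (s : ℝ) : ℝ :=
  ∑' n : ℕ, (n : ℝ) ^ k * wfun υ a p s n

lemma K_eq_s12 (υ a y p μ : ℝ) : K υ a y p μ = S υ a p 0 (y + μ) := by
  unfold K S wfun
  exact tsum_congr fun n => by rw [pow_zero, one_mul]

lemma wfun_pos {υ : ℝ} (hυ : 0 < υ) (a p s : ℝ) (n : ℕ) : 0 < wfun υ a p s n := by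
  unfold wfun
  have : (0:ℝ) < (Nat.factorial n : ℝ) := by exact_mod_cast n.factorial_pos
  positivity

lemma summable_S {υ a p : ℝ} (hυ : 0 < υ) (hc : 0 < a * p / 2) (k : ℕ) (s : ℝ) :
    Summable (fun n : ℕ => (n : ℝ) ^ k * wfun υ a p s n) := by
  set c := a * p / 2 with hcdef
  set B : ℝ := (k : ℝ) + |Real.log υ| + |s| + 1 with hB
  have key : ∀ n : ℕ, (n : ℝ) ^ k * wfun υ a p s n
      ≤ Real.exp (B ^ 2 / (4 * c)) * Real.exp (-1) ^ n := by
    intro n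
    have hn0 : (0:ℝ) ≤ (n : ℝ) := n.cast_nonneg
    have h1 : (n : ℝ) ^ k ≤ Real.exp ((k : ℝ) * n) := by
      calc (n : ℝ) ^ k ≤ (Real.exp n) ^ k := by
            apply pow_le_pow_left₀ hn0
            linarith [Real.add_one_le_exp (n : ℝ)]
        _ = Real.exp ((k : ℝ) * n) := by
            rw [← Real.exp_nat_mul, mul_comm]
    have h2 : υ ^ n / (Nat.factorial n : ℝ) ≤ Real.exp (|Real.log υ| * n) := by
      have hfac : (1:ℝ) ≤ (Nat.factorial n : ℝ) := by exact_mod_cast n.factorial_pos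
      calc υ ^ n / (Nat.factorial n : ℝ) ≤ υ ^ n :=
            div_le_self (pow_nonneg hυ.le n) hfac
        _ = Real.exp (Real.log υ * n) := by
            rw [mul_comm, Real.exp_nat_mul, Real.exp_log hυ]
        _ ≤ Real.exp (|Real.log υ| * n) := by
            apply Real.exp_le_exp.mpr
            exact mul_le_mul_of_nonneg_right (le_abs_self _) hn0
    have h3 : Real.exp (s * n - c * (n:ℝ) ^ 2) ≤ Real.exp (|s| * n - c * (n:ℝ) ^ 2) := by
      apply Real.exp_le_exp.mpr
      have := mul_le_mul_of_nonneg_right (le_abs_self s) hn0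
      linarith
    have hw : wfun υ a p s n ≤ Real.exp (|Real.log υ| * n) * Real.exp (|s| * n - c * (n:ℝ) ^ 2) := by
      unfold wfun
      rw [← hcdef]
      exact mul_le_mul h2 h3 (Real.exp_pos _).le (Real.exp_pos _).le
    calc (n : ℝ) ^ k * wfun υ a p s n
        ≤ Real.exp ((k : ℝ) * n) *
          (Real.exp (|Real.log υ| * n) * Real.exp (|s| * n - c * (n:ℝ) ^ 2)) := by
          apply mul_le_mul h1 hw (wfun_pos hυ a p s n).le (Real.exp_pos _).le
      _ = Real.exp ((k : ℝ) * n + |Real.log υ| * n + (|s| * n - c * (n:ℝ) ^ 2)) := by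
          rw [← Real.exp_add, ← Real.exp_add, add_assoc]
      _ ≤ Real.exp (B ^ 2 / (4 * c) + (-1) * n) := by
          apply Real.exp_le_exp.mpr
          have hsq : 0 ≤ (2 * c * (n:ℝ) - B) ^ 2 := sq_nonneg _
          have h4c : (0:ℝ) < 4 * c := by linarith
          rw [div_add' _ _ _ (ne_of_gt h4c)]
          rw [le_div_iff₀ h4c]
          have hrw : (k:ℝ) * n + |Real.log υ| * n + (|s| * n - c * (n:ℝ) ^ 2)
              = (B - 1) * (n:ℝ) - c * (n:ℝ) ^ 2 := by rw [hB]; ring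
          rw [hrw]
          nlinarith [hsq]
      _ = Real.exp (B ^ 2 / (4 * c)) * Real.exp (-1) ^ n := by
          rw [Real.exp_add, ← Real.exp_nat_mul, mul_comm (n:ℝ) (-1)]
  apply Summable.of_nonneg_of_le (fun n => ?_) key
  · exact (summable_geometric_of_lt_one (Real.exp_pos _).le
      (Real.exp_lt_one_iff.mpr (by norm_num))).mul_left _
  · exact mul_nonneg (pow_nonneg (Nat.cast_nonneg n) k) (wfun_pos hυ a p s n).le

lemma S0_pos {υ a p : ℝ} (hυ : 0 < υ) (hc : 0 < a * p / 2) (s : ℝ) :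
    0 < S υ a p 0 s := by
  unfold S
  apply Summable.tsum_pos (summable_S hυ hc 0 s)
    (fun n => mul_nonneg (pow_nonneg (Nat.cast_nonneg n) 0) (wfun_pos hυ a p s n).le) 0
  simpa using (wfun_pos hυ a p s 0)

lemma hasDerivAt_S {υ a p : ℝ} (hυ : 0 < υ) (hc : 0 < a * p / 2) (k : ℕ) (s : ℝ) :
    HasDerivAt (S υ a p k) (S υ a p (k + 1) s) s := by
  have H := hasDerivAt_tsum_of_isPreconnected
    (u := fun n : ℕ => (n : ℝ) ^ (k + 1) * wfun υ a p (s + 1) n)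
    (g := fun (n : ℕ) (z : ℝ) => (n : ℝ) ^ k * wfun υ a p z n)
    (g' := fun (n : ℕ) (z : ℝ) => (n : ℝ) ^ (k + 1) * wfun υ a p z n)
    (summable_S hυ hc (k + 1) (s + 1)) (isOpen_Ioo (a := s - 1) (b := s + 1))
    (isPreconnected_Ioo)
    (fun n z _ => by
      have h1 : HasDerivAt (fun z : ℝ => z * (n:ℝ) - (a * p / 2) * (n:ℝ) ^ 2) (n : ℝ) z := by
        simpa using ((hasDerivAt_id z).mul_const (n : ℝ)).sub_const ((a * p / 2) * (n:ℝ) ^ 2)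
      have h2 := ((h1.exp.const_mul (υ ^ n / (Nat.factorial n : ℝ))).const_mul ((n:ℝ) ^ k))
      convert h2 using 1
      rfl
      unfold wfun
      ring
      unfold wfun
      ring)
    (fun n z hz => by
      rw [Real.norm_of_nonneg
        (mul_nonneg (pow_nonneg (Nat.cast_nonneg n) _) (wfun_pos hυ a p z n).le)]
      apply mul_le_mul_of_nonneg_left _ (pow_nonneg (Nat.cast_nonneg n) _)
      unfold wfun
      apply mul_le_mul_of_nonneg_left _ (div_nonneg (pow_nonneg hυ.le n) (Nat.cast_nonneg _))
      apply Real.exp_le_exp.mpr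
      have : z * n ≤ (s + 1) * n :=
        mul_le_mul_of_nonneg_right hz.2.le (Nat.cast_nonneg n)
      linarith)
    (show s ∈ Set.Ioo (s - 1) (s + 1) by constructor <;> linarith)
    (summable_S hυ hc k s)
    (show s ∈ Set.Ioo (s - 1) (s + 1) by constructor <;> linarith)
  exact H

lemma CS {υ a p : ℝ} (hυ : 0 < υ) (hc : 0 < a * p / 2) (s : ℝ) :
    S υ a p 1 s ^ 2 < S υ a p 0 s * S υ a p 2 s := by
  set A := S υ a p 0 s with hA
  set B := S υ a p 1 s with hBd
  set C := S υ a p 2 s with hC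
  have hApos : 0 < A := S0_pos hυ hc s
  set t : ℝ := B / A with ht
  have htA : t * A = B := div_mul_cancel₀ B (ne_of_gt hApos)
  have s0 := summable_S hυ hc 0 s
  have s1 := summable_S hυ hc 1 s
  have s2 := summable_S hυ hc 2 s
  simp only [pow_zero, one_mul, pow_one] at s0 s1
  have hsumm : Summable (fun n : ℕ => ((n : ℝ) - t) ^ 2 * wfun υ a p s n) := by
    apply Summable.congr ((s2.sub (s1.mul_left (2 * t))).add (s0.mul_left (t ^ 2)))
    intro n
    ring
  have htsum : ∑' n : ℕ, ((n : ℝ) - t) ^ 2 * wfun υ a p s n = C - 2 * t * B + t ^ 2 * A := by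
    calc ∑' n : ℕ, ((n : ℝ) - t) ^ 2 * wfun υ a p s n
        = ∑' n : ℕ, ((n : ℝ) ^ 2 * wfun υ a p s n - 2 * t * ((n:ℝ) * wfun υ a p s n)
            + t ^ 2 * wfun υ a p s n) := tsum_congr fun n => by ring
      _ = (∑' n : ℕ, ((n : ℝ) ^ 2 * wfun υ a p s n - 2 * t * ((n:ℝ) * wfun υ a p s n)))
            + ∑' n : ℕ, t ^ 2 * wfun υ a p s n :=
          Summable.tsum_add (s2.sub (s1.mul_left (2 * t))) (s0.mul_left (t ^ 2))
      _ = ((∑' n : ℕ, (n : ℝ) ^ 2 * wfun υ a p s n)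
            - ∑' n : ℕ, 2 * t * ((n:ℝ) * wfun υ a p s n))
            + ∑' n : ℕ, t ^ 2 * wfun υ a p s n := by
          rw [Summable.tsum_sub s2 (s1.mul_left (2 * t))]
      _ = C - 2 * t * B + t ^ 2 * A := by
          rw [tsum_mul_left, tsum_mul_left]
          rw [hA, hBd, hC]
          unfold S
          simp [pow_one]
  have hlow : (0 - t) ^ 2 * wfun υ a p s 0 + (1 - t) ^ 2 * wfun υ a p s 1
      ≤ ∑' n : ℕ, ((n : ℝ) - t) ^ 2 * wfun υ a p s n := by
    have := Summable.sum_le_tsum (Finset.range 2)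
      (fun i _ => mul_nonneg (sq_nonneg _) (wfun_pos hυ a p s i).le) hsumm
    simpa [Finset.sum_range_succ] using this
  have hw0 := wfun_pos hυ a p s 0
  have hw1 := wfun_pos hυ a p s 1
  have hpos : 0 < C - 2 * t * B + t ^ 2 * A := by
    rw [← htsum]
    have : 0 < (0 - t) ^ 2 * wfun υ a p s 0 + (1 - t) ^ 2 * wfun υ a p s 1 := by
      rcases le_or_gt t (1/2) with h | h
      · have h1 : (1/2:ℝ) ^ 2 * wfun υ a p s 1 ≤ (1 - t) ^ 2 * wfun υ a p s 1 :=
          mul_le_mul_of_nonneg_right (by nlinarith) hw1.le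
        nlinarith [mul_nonneg (sq_nonneg (0 - t)) hw0.le]
      · have h1 : (1/2:ℝ) ^ 2 * wfun υ a p s 0 ≤ (0 - t) ^ 2 * wfun υ a p s 0 :=
          mul_le_mul_of_nonneg_right (by nlinarith) hw0.le
        nlinarith [mul_nonneg (sq_nonneg (1 - t)) hw1.le]
    linarith
  have hkey : A * C - B ^ 2 = A * (C - 2 * t * B + t ^ 2 * A) := by
    rw [← htA]; ring
  nlinarith [mul_pos hApos hpos]

lemma hasDerivAt_E_y {υ a p : ℝ} (hυ : 0 < υ) (hc : 0 < a * p / 2) (hp : 0 < p)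
    (μ' y' : ℝ) :
    HasDerivAt (fun z => E υ a z p μ')
      (-(y' / p) + S υ a p 1 (y' + μ') / S υ a p 0 (y' + μ')) y' := by
  have h1 : HasDerivAt (fun z : ℝ => -(z ^ 2) / (2 * p)) (-(y' / p)) y' := by
    have := ((hasDerivAt_pow 2 y').neg.div_const (2 * p))
    convert this using 1
    rfl
    rfl
    rfl
    field_simp
    ring
  have hadd : HasDerivAt (fun z : ℝ => z + μ') 1 y' := (hasDerivAt_id y').add_const μ'
  have hS := (hasDerivAt_S hυ hc 0 (y' + μ')).comp y' hadd
  have h2 : HasDerivAt (fun z : ℝ => Real.log (S υ a p 0 (z + μ')))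
      (S υ a p 1 (y' + μ') / S υ a p 0 (y' + μ')) y' := by
    have := hS.log (ne_of_gt (S0_pos hυ hc (y' + μ')))
    simpa using this
  have := h1.add h2
  apply this.congr_of_eventuallyEq
  filter_upwards with z
  rw [E, K_eq_s12]
  rfl

theorem stmt_12 (υ a : ℝ) (hυ : 0 < υ) (ha : 1 < a) (p μ y : ℝ) (hp : 0 < p) :
    deriv (fun μ' => deriv (fun y' => E υ a y' p μ') y) μ =
      deriv (deriv (fun y' => E υ a y' p μ)) y + 1 / p ∧
    0 < deriv (deriv (fun y' => E υ a y' p μ)) y + 1 / p := by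
  have hc : 0 < a * p / 2 := by nlinarith
  set s := y + μ with hs
  have hS0 := hasDerivAt_S hυ hc 0 s
  have hS1 := hasDerivAt_S hυ hc 1 s
  have hne : S υ a p 0 s ≠ 0 := ne_of_gt (S0_pos hυ hc s)
  set D : ℝ := (S υ a p 2 s * S υ a p 0 s - S υ a p 1 s * S υ a p 1 s) / S υ a p 0 s ^ 2
    with hD
  have hG : HasDerivAt (fun z => S υ a p 1 z / S υ a p 0 z) D s := hS1.div hS0 hne
  have hDpos : 0 < D := by
    apply div_pos
    · have := CS hυ hc s
      nlinarith
    · positivity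
  -- second y-derivative
  have hdy : deriv (fun y' => E υ a y' p μ)
      = fun z => -(z / p) + S υ a p 1 (z + μ) / S υ a p 0 (z + μ) :=
    funext fun z => (hasDerivAt_E_y hυ hc hp μ z).deriv
  have hdyy : deriv (deriv (fun y' => E υ a y' p μ)) y = -(1 / p) + D := by
    rw [hdy]
    have h1 : HasDerivAt (fun z : ℝ => -(z / p)) (-(1 / p)) y :=
      ((hasDerivAt_id y).div_const p).neg
    have h2 : HasDerivAt (fun z : ℝ => S υ a p 1 (z + μ) / S υ a p 0 (z + μ)) D y := by
      have hadd : HasDerivAt (fun z : ℝ => z + μ) 1 y := (hasDerivAt_id y).add_const μ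
      have := hG.comp y hadd
      rw [mul_one] at this
      exact this
    exact (h1.add h2).deriv
  -- μ-derivative
  have hdμ : (fun μ' => deriv (fun y' => E υ a y' p μ') y)
      = fun μ' => -(y / p) + S υ a p 1 (y + μ') / S υ a p 0 (y + μ') :=
    funext fun μ' => (hasDerivAt_E_y hυ hc hp μ' y).deriv
  have hdμd : deriv (fun μ' => deriv (fun y' => E υ a y' p μ') y) μ = D := by
    rw [hdμ]
    have hadd : HasDerivAt (fun μ' : ℝ => y + μ') 1 μ := (hasDerivAt_id μ).const_add y
    have h2 : HasDerivAt (fun μ' : ℝ => S υ a p 1 (y + μ') / S υ a p 0 (y + μ')) D μ := by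
      have := hG.comp μ hadd
      rw [mul_one] at this
      exact this
    exact (h2.const_add (-(y / p))).deriv
  rw [hdμd, hdyy]
  constructor
  · ring
  · linarith
end
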